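/- There exists a constant C_Γ > 0, depending only on the Schottky data, such that for every nonempty word 𝐚 ∈ W° and every letter b ∈ A with 𝐚 → b: C_Γ^{-1} |I_𝐚| ≤ |I_{𝐚b}| ≤ |I_𝐚|. -/

import Mathlib

open MeasureTheory Set Real Pointwise

noncomputable section

abbrev SL2 := Matrix.SpecialLinearGroup (Fin 2) ℝ

/-- The Möbius transformation of `ℝ` associated to `g ∈ SL(2,ℝ)` (junk value at the pole). -/
def mobius (g : SL2) (x : ℝ) : ℝ :=
  (g 0 0 * x + g 0 1) / (g 1 0 * x + g 1 1)

/-- The derivative `γ'(x) = (cx+d)⁻²` of the Möbius transformation. -/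
def mobiusDeriv (g : SL2) (x : ℝ) : ℝ :=
  ((g 1 0 * x + g 1 1) ^ 2)⁻¹

/-- The derivative of the Möbius transformation in the ball model,
`|γ'(x)|_B = ((1+x²)/(1+γ(x)²)) γ'(x)`. -/
def mobiusDerivB (g : SL2) (x : ℝ) : ℝ :=
  ((1 + x ^ 2) / (1 + mobius g x ^ 2)) * mobiusDeriv g x

/-- The Möbius action of `SL(2,ℝ)` on `ℝ ∪ {∞}`. -/
def mobiusOP (g : SL2) (x : OnePoint ℝ) : OnePoint ℝ :=
  Option.elim x
    (if g 1 0 = 0 then OnePoint.infty else ((g 0 0 / g 1 0 : ℝ) : OnePoint ℝ))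
    (fun y => if g 1 0 * y + g 1 1 = 0 then OnePoint.infty
      else ((mobius g y : ℝ) : OnePoint ℝ))

/-- The pole `γ⁻¹(∞) = -d/c` of `γ = [[a,b],[c,d]]`. -/
def mobiusPole (g : SL2) : ℝ := -(g 1 1) / (g 1 0)

/-- The distortion factor `α(γ, [x₀,x₁]) = log((γ⁻¹(∞) − x₁)/(γ⁻¹(∞) − x₀))`,
with the convention `α = 0` when `γ⁻¹(∞) = ∞` (i.e. `c = 0`). -/
def alphaDist (g : SL2) (x₀ x₁ : ℝ) : ℝ :=
  if g 1 0 = 0 then 0 else Real.log ((mobiusPole g - x₁) / (mobiusPole g - x₀))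

/-- The letter `ā` paired with `a` in the alphabet `{1,…,2r}` (modelled by `Fin (2r)`). -/
def bar {r : ℕ} (a : Fin (2 * r)) : Fin (2 * r) :=
  if h : (a : ℕ) < r then ⟨(a : ℕ) + r, by omega⟩
  else ⟨(a : ℕ) - r, by have := a.isLt; omega⟩

/-- Schottky data: `2r` disjoint compact intervals `I_a = [ξ₀ a, ξ₁ a]` on the real line and
transformations `γ_a ∈ SL(2,ℝ)` with `γ_ā = γ_a⁻¹` such that `γ_a` maps the complement (in
`ℝ ∪ {∞}`) of the interior of `I_ā` onto `I_a`. -/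
structure SchottkyData (r : ℕ) where
  hr : 2 ≤ r
  ξ₀ : Fin (2 * r) → ℝ
  ξ₁ : Fin (2 * r) → ℝ
  hlt : ∀ a, ξ₀ a < ξ₁ a
  hdisj : ∀ a b, a ≠ b → Disjoint (Icc (ξ₀ a) (ξ₁ a)) (Icc (ξ₀ b) (ξ₁ b))
  γ : Fin (2 * r) → SL2
  hinv : ∀ a, γ (bar a) = (γ a)⁻¹
  hmap : ∀ a, mobiusOP (γ a) ''
      (univ \ ((fun t : ℝ => (t : OnePoint ℝ)) '' Ioo (ξ₀ (bar a)) (ξ₁ (bar a))))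
      = (fun t : ℝ => (t : OnePoint ℝ)) '' Icc (ξ₀ a) (ξ₁ a)

namespace SchottkyData

variable {r : ℕ}

/-- `l` is a word: no letter is followed by its bar. -/
def IsWord (_ : SchottkyData r) (l : List (Fin (2 * r))) : Prop :=
  l.Chain' fun p q => q ≠ bar p

/-- The group element `γ_𝐚 = γ_{a_1} ⋯ γ_{a_n}` of a word. -/
def wordγ (S : SchottkyData r) (l : List (Fin (2 * r))) : SL2 :=
  (l.map S.γ).prod

/-- The interval `I_𝐚 = γ_{𝐚'}(I_{a_n})` of a nonempty word (and `∅` for the empty word). -/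
def wordI (S : SchottkyData r) (l : List (Fin (2 * r))) : Set ℝ :=
  if h : l = [] then ∅
  else mobius (S.wordγ l.dropLast) '' Icc (S.ξ₀ (l.getLast h)) (S.ξ₁ (l.getLast h))

/-- The limit set `Λ_Γ = ⋂_n ⋃_{𝐚 ∈ W_n} I_𝐚`. -/
def limitSet (S : SchottkyData r) : Set ℝ :=
  ⋂ n : ℕ, ⋃ (l : List (Fin (2 * r))) (_ : S.IsWord l ∧ l.length = n + 1), S.wordI l

/-- `μ` is the (δ-conformal) Patterson–Sullivan measure: a Borel probability measure
supported on the limit set satisfying the equivariance property under the group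
generated by the Schottky transformations. -/
def IsPS (S : SchottkyData r) (δ : ℝ) (μ : Measure ℝ) : Prop :=
  IsProbabilityMeasure μ ∧ μ S.limitSetᶜ = 0 ∧
    ∀ g ∈ Subgroup.closure (Set.range S.γ), ∀ f : ℝ → ℝ, Measurable f →
      (∃ C, ∀ x, |f x| ≤ C) →
      ∫ x, f x ∂μ = ∫ x, f (mobius g x) * mobiusDerivB g x ^ δ ∂μ

/-- The partition `Z(τ) = {𝐚 ∈ W° : |I_𝐚| ≤ τ < |I_{𝐚'}|}` (with `|I_∅| = ∞`). -/
def Zpart (S : SchottkyData r) (τ : ℝ) : Set (List (Fin (2 * r))) :=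
  {l | S.IsWord l ∧ l ≠ [] ∧ (MeasureTheory.volume (S.wordI l)).toReal ≤ τ ∧
    (l.dropLast = [] ∨ τ < (MeasureTheory.volume (S.wordI l.dropLast)).toReal)}

end SchottkyData

/-- The length `|I|` of an interval `I ⊂ ℝ`. -/
def ivlen (I : Set ℝ) : ℝ := (MeasureTheory.volume I).toReal

/-- `𝐚 ⇝ 𝐛` : the last letter of `𝐚` equals the first letter of `𝐛`. -/
def chn {X : Type*} (l m : List X) : Prop :=
  ∃ (h1 : l ≠ []) (h2 : m ≠ []), l.getLast h1 = m.head h2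

/-- The center of an interval. -/
def ctr (I : Set ℝ) : ℝ := (sInf I + sSup I) / 2

end

open MeasureTheory Set Real

noncomputable section

lemma det2 (g : SL2) : g 0 0 * g 1 1 - g 0 1 * g 1 0 = 1 := by
  have := g.prop; rwa [Matrix.det_fin_two] at this

lemma mul_entry (A B : SL2) (i j : Fin 2) :
    (A*B) i j = A i 0 * B 0 j + A i 1 * B 1 j := by
  simp [Matrix.SpecialLinearGroup.coe_mul, Matrix.mul_apply, Fin.sum_univ_two]

/-- denominator of a product factors. -/
lemma den_mul (A B : SL2) (x : ℝ) (h : B 1 0 * x + B 1 1 ≠ 0) :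
    (A*B) 1 0 * x + (A*B) 1 1
      = (A 1 0 * mobius B x + A 1 1) * (B 1 0 * x + B 1 1) := by
  rw [mul_entry, mul_entry, mobius]
  field_simp
  ring

lemma mobius_mul (A B : SL2) (x : ℝ) (h : B 1 0 * x + B 1 1 ≠ 0) :
    mobius (A*B) x = mobius A (mobius B x) := by
  have hn : (A*B) 0 0 * x + (A*B) 0 1
      = (A 0 0 * mobius B x + A 0 1) * (B 1 0 * x + B 1 1) := by
    rw [mul_entry, mul_entry, mobius]; field_simp; ring
  rw [mobius, mobius, hn, den_mul A B x h, mul_div_mul_right _ _ h]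

lemma mobius_sub (g : SL2) {x y : ℝ} (hx : g 1 0 * x + g 1 1 ≠ 0)
    (hy : g 1 0 * y + g 1 1 ≠ 0) :
    mobius g y - mobius g x
      = (y - x) / ((g 1 0 * x + g 1 1) * (g 1 0 * y + g 1 1)) := by
  have hd := det2 g
  have key : (g 0 0 * y + g 0 1) * (g 1 0 * x + g 1 1)
      - (g 1 0 * y + g 1 1) * (g 0 0 * x + g 0 1) = y - x := by
    linear_combination (y - x) * hd
  rw [mobius, mobius, div_sub_div _ _ hy hx, key, mul_comm (g 1 0 * y + g 1 1)]

/-- denominators have the same (positive) product on a pole-free interval. -/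
lemma den_prod_pos (g : SL2) {u v : ℝ} (huv : u ≤ v)
    (h : ∀ z ∈ Icc u v, g 1 0 * z + g 1 1 ≠ 0)
    {x y : ℝ} (hx : x ∈ Icc u v) (hy : y ∈ Icc u v) :
    0 < (g 1 0 * x + g 1 1) * (g 1 0 * y + g 1 1) := by
  rcases eq_or_ne (g 1 0) 0 with hc | hc
  · have h11 := h u (by simp [huv])
    rw [hc] at h11 ⊢
    simp only [zero_mul, zero_add] at h11 ⊢
    exact mul_self_pos.mpr h11
  · set p := -(g 1 1) / (g 1 0) with hp
    have hden : ∀ z : ℝ, g 1 0 * z + g 1 1 = g 1 0 * (z - p) := by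
      intro z; rw [hp]; field_simp; ring
    have hpni : p ∉ Icc u v := fun hmem => h p hmem (by rw [hden]; ring_nf)
    rw [Set.mem_Icc, not_and_or, not_le, not_le] at hpni
    rw [hden, hden]
    rcases hpni with hpu | hpv
    · have h1 : x - p > 0 := by have := hx.1; simp at *; linarith
      have h2 : y - p > 0 := by have := hy.1; simp at *; linarith
      have heq : (g 1 0 * (x-p)) * (g 1 0 * (y-p)) = (g 1 0 * g 1 0) * ((x-p)*(y-p)) := by ring
      rw [heq]
      exact mul_pos (mul_self_pos.mpr hc) (mul_pos h1 h2)
    · have h1 : x - p < 0 := by have := hx.2; simp at *; linarith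
      have h2 : y - p < 0 := by have := hy.2; simp at *; linarith
      have heq : (g 1 0 * (x-p)) * (g 1 0 * (y-p)) = (g 1 0 * g 1 0) * ((x-p)*(y-p)) := by ring
      rw [heq]
      exact mul_pos (mul_self_pos.mpr hc) (mul_pos_of_neg_of_neg h1 h2)

lemma mobius_strictMonoOn (g : SL2) {u v : ℝ} (huv : u ≤ v)
    (h : ∀ z ∈ Icc u v, g 1 0 * z + g 1 1 ≠ 0) :
    StrictMonoOn (mobius g) (Icc u v) := by
  intro x hx y hy hxy
  have := den_prod_pos g huv h hx hy
  have hs := mobius_sub g (h x hx) (h y hy)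
  have : 0 < mobius g y - mobius g x := by
    rw [hs]; exact div_pos (by linarith) this
  linarith

lemma mobius_continuousOn (g : SL2) {u v : ℝ}
    (h : ∀ z ∈ Icc u v, g 1 0 * z + g 1 1 ≠ 0) :
    ContinuousOn (mobius g) (Icc u v) := by
  apply ContinuousOn.div
  · fun_prop
  · fun_prop
  · exact h

lemma mobius_image_Icc (g : SL2) {u v : ℝ} (huv : u ≤ v)
    (h : ∀ z ∈ Icc u v, g 1 0 * z + g 1 1 ≠ 0) :
    mobius g '' Icc u v = Icc (mobius g u) (mobius g v) := by
  apply Set.Subset.antisymm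
  · rintro _ ⟨x, hx, rfl⟩
    have hm := (mobius_strictMonoOn g huv h).monotoneOn
    exact ⟨hm (by simp [huv]) hx hx.1, hm hx (by simp [huv]) hx.2⟩
  · exact intermediate_value_Icc huv (mobius_continuousOn g h)

lemma ivlen_Icc {a b : ℝ} (h : a ≤ b) : ivlen (Icc a b) = b - a := by
  rw [ivlen, Real.volume_Icc, ENNReal.toReal_ofReal (by linarith)]

namespace SchottkyData

variable {r : ℕ} (S : SchottkyData r)

lemma not_mem_Ioo {a c : Fin (2*r)} (h : a ≠ c) {z : ℝ}
    (hz : z ∈ Icc (S.ξ₀ a) (S.ξ₁ a)) : z ∉ Ioo (S.ξ₀ c) (S.ξ₁ c) := by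
  intro hmem
  exact Set.disjoint_left.mp (S.hdisj a c h) hz (Ioo_subset_Icc_self hmem)

lemma letter_maps (a : Fin (2*r)) {x : ℝ}
    (hx : x ∉ Ioo (S.ξ₀ (bar a)) (S.ξ₁ (bar a))) :
    (S.γ a) 1 0 * x + (S.γ a) 1 1 ≠ 0 ∧
      mobius (S.γ a) x ∈ Icc (S.ξ₀ a) (S.ξ₁ a) := by
  have hmem : ((x : ℝ) : OnePoint ℝ) ∈
      (univ \ ((fun t : ℝ => (t : OnePoint ℝ)) '' Ioo (S.ξ₀ (bar a)) (S.ξ₁ (bar a)))) := by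
    refine ⟨trivial, ?_⟩
    rintro ⟨t, ht, hte⟩
    have hte' : (t : OnePoint ℝ) = (x : OnePoint ℝ) := hte
    rw [OnePoint.coe_eq_coe] at hte'
    exact hx (hte' ▸ ht)
  have himg := S.hmap a ▸ Set.mem_image_of_mem _ hmem
  obtain ⟨t, ht, hte⟩ := himg
  rw [mobiusOP] at hte
  simp only [Option.elim] at hte
  by_cases hd : (S.γ a) 1 0 * x + (S.γ a) 1 1 = 0
  · rw [if_pos hd] at hte
    exact absurd hte (OnePoint.infty_ne_coe t).symm
  · rw [if_neg hd] at hte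
    have hte' : (t : OnePoint ℝ) = ((mobius (S.γ a) x : ℝ) : OnePoint ℝ) := hte
    rw [OnePoint.coe_eq_coe] at hte'
    have : mobius (S.γ a) x = t := hte'.symm
    exact ⟨hd, this ▸ ht⟩

lemma letter_infty (a : Fin (2*r)) : (S.γ a) 1 0 ≠ 0 := by
  intro hc
  have hmem : (OnePoint.infty : OnePoint ℝ) ∈
      (univ \ ((fun t : ℝ => (t : OnePoint ℝ)) '' Ioo (S.ξ₀ (bar a)) (S.ξ₁ (bar a)))) := by
    refine ⟨trivial, ?_⟩
    rintro ⟨t, _, hte⟩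
    exact (OnePoint.coe_ne_infty t) hte
  have himg := S.hmap a ▸ Set.mem_image_of_mem _ hmem
  obtain ⟨t, _, hte⟩ := himg
  rw [mobiusOP] at hte
  simp only [Option.elim, if_pos hc] at hte
  exact (OnePoint.coe_ne_infty t) hte

end SchottkyData

namespace SchottkyData

variable {r : ℕ} (S : SchottkyData r)

lemma wordγ_cons (a : Fin (2*r)) (t : List (Fin (2*r))) :
    S.wordγ (a :: t) = S.γ a * S.wordγ t := by
  simp [wordγ]

lemma word_maps : ∀ (l : List (Fin (2*r))) (hne : l ≠ []) (_ : S.IsWord l) (x : ℝ),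
    x ∉ Ioo (S.ξ₀ (bar (l.getLast hne))) (S.ξ₁ (bar (l.getLast hne))) →
    (S.wordγ l) 1 0 * x + (S.wordγ l) 1 1 ≠ 0 ∧
      mobius (S.wordγ l) x ∈ Icc (S.ξ₀ (l.head hne)) (S.ξ₁ (l.head hne)) := by
  intro l
  induction l with
  | nil => intro hne; exact absurd rfl hne
  | cons a t ih =>
    intro hne hw x hx
    rcases eq_or_ne t [] with rfl | hte
    · have h1 : S.wordγ [a] = S.γ a := by simp [wordγ]
      simp only [List.getLast_singleton] at hx
      rw [h1]
      exact ⟨(S.letter_maps a hx).1, by simpa using (S.letter_maps a hx).2⟩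
    · have hwt : S.IsWord t := (List.isChain_cons.mp hw).2
      have hhead : t.head hte ≠ bar a :=
        (List.isChain_cons.mp hw).1 _ (List.head?_eq_head hte)
      have hlast : (a :: t).getLast hne = t.getLast hte := List.getLast_cons hte
      rw [hlast] at hx
      obtain ⟨hden, hmem⟩ := ih hte hwt x hx
      have hy : mobius (S.wordγ t) x ∉ Ioo (S.ξ₀ (bar a)) (S.ξ₁ (bar a)) :=
        S.not_mem_Ioo hhead hmem
      obtain ⟨hden2, hmem2⟩ := S.letter_maps a hy
      rw [wordγ_cons]
      constructor
      · rw [den_mul _ _ _ hden]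
        exact mul_ne_zero hden2 hden
      · rw [mobius_mul _ _ _ hden]
        simpa using hmem2

lemma word_pole (l : List (Fin (2*r))) (hne : l ≠ []) (hw : S.IsWord l) :
    (S.wordγ l) 1 0 ≠ 0 ∧
      mobiusPole (S.wordγ l) ∈ Ioo (S.ξ₀ (bar (l.getLast hne))) (S.ξ₁ (bar (l.getLast hne))) := by
  set g := S.wordγ l with hg
  set e := bar (l.getLast hne)
  set h := l.head hne
  have hc : g 1 0 ≠ 0 := by
    intro hc0
    have hd := det2 g
    rw [hc0] at hd
    simp only [mul_zero, sub_zero] at hd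
    have h11 : g 1 1 ≠ 0 := by intro h0; rw [h0] at hd; simp at hd
    have h00 : g 0 0 ≠ 0 := by intro h0; rw [h0] at hd; simp at hd
    set s := g 0 0 / g 1 1 with hs
    set tt := g 0 1 / g 1 1 with ht
    have hpos : 0 < s := by
      have hss : s = g 0 0 * g 0 0 := by
        rw [hs, div_eq_iff h11]; linear_combination (-(g 0 0)) * hd
      rw [hss]; exact mul_self_pos.mpr h00
    set x := max (S.ξ₁ e) ((S.ξ₁ h + 1 - tt)/s) with hxdef
    have hx : x ∉ Ioo (S.ξ₀ e) (S.ξ₁ e) := fun hmem =>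
      absurd hmem.2 (not_lt.mpr (le_max_left _ _))
    obtain ⟨_, hmem⟩ := S.word_maps l hne hw x hx
    rw [← hg] at hmem
    have hval : mobius g x = s * x + tt := by
      rw [mobius, hc0, hs, ht]
      field_simp
      rw [mul_zero, zero_add, mul_div_cancel_right₀ _ h11]
    have hxge : (S.ξ₁ h + 1 - tt)/s ≤ x := le_max_right _ _
    have h2 : S.ξ₁ h + 1 ≤ s * x + tt := by
      have := (div_le_iff₀ hpos).mp hxge
      linarith
    have h3 := hmem.2
    rw [hval] at h3
    have : S.ξ₁ h = S.ξ₁ (l.head hne) := rfl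
    linarith [this ▸ h3]
  refine ⟨hc, ?_⟩
  by_contra hp
  obtain ⟨hden, _⟩ := S.word_maps l hne hw (mobiusPole g) hp
  apply hden
  rw [← hg, mobiusPole]
  field_simp
  ring

end SchottkyData

lemma key_ineq {p u v u' v' mm M d0 : ℝ} (h1 : u ≤ u') (h2 : u' ≤ v') (h3 : v' ≤ v)
    (hp : p < u ∨ v < p) (hpm : mm ≤ p) (hpM : p ≤ M) (hum : mm ≤ u) (hvM : v ≤ M)
    (hgap1 : p < u → d0 ≤ u - p) (hgap2 : v < p → d0 ≤ p - v) (hd0 : 0 < d0) :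
    d0 * ((u' - p) * (v' - p)) ≤ (M - mm) * ((u - p) * (v - p)) := by
  rcases hp with hpu | hvp
  · have hg := hgap1 hpu
    have A : d0 * (u' - p) ≤ (u - p) * (M - mm) :=
      mul_le_mul hg (by linarith) (by linarith) (by linarith)
    have B : (d0 * (u' - p)) * (v' - p) ≤ ((u - p) * (M - mm)) * (v - p) :=
      mul_le_mul A (by linarith) (by linarith)
        (mul_nonneg (by linarith) (by linarith))
    nlinarith [B]
  · have hg := hgap2 hvp
    have A : d0 * (p - v') ≤ (p - v) * (M - mm) :=
      mul_le_mul hg (by linarith) (by linarith) (by linarith)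
    have B : (d0 * (p - v')) * (p - u') ≤ ((p - v) * (M - mm)) * (p - u) :=
      mul_le_mul A (by linarith) (by linarith)
        (mul_nonneg (by linarith) (by linarith))
    nlinarith [B]

namespace SchottkyData

variable {r : ℕ} (S : SchottkyData r)

lemma order {a b : Fin (2*r)} (h : a ≠ b) : S.ξ₁ a < S.ξ₀ b ∨ S.ξ₁ b < S.ξ₀ a := by
  by_contra hcon
  push_neg at hcon
  obtain ⟨h1, h2⟩ := hcon
  have ha := S.hlt a
  have hb := S.hlt b
  have hz : max (S.ξ₀ a) (S.ξ₀ b) ∈ Icc (S.ξ₀ a) (S.ξ₁ a) ∩ Icc (S.ξ₀ b) (S.ξ₁ b) := by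
    constructor <;> constructor
    · exact le_max_left _ _
    · exact max_le ha.le h1
    · exact le_max_right _ _
    · exact max_le h2 hb.le
  exact Set.disjoint_left.mp (S.hdisj a b h) hz.1 hz.2

end SchottkyData

set_option maxHeartbeats 2000000 in
/-- **Parent–child ratio:** there is `C_Γ > 0` depending only on the Schottky data such that
`C_Γ⁻¹|I_𝐚| ≤ |I_{𝐚b}| ≤ |I_𝐚|` for all nonempty words `𝐚` and letters `b` with `𝐚 → b`. -/
theorem parent_child (r : ℕ) (S : SchottkyData r) :
    ∃ C > (0 : ℝ), ∀ (l : List (Fin (2 * r))) (b : Fin (2 * r)),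
      l ≠ [] → S.IsWord (l ++ [b]) →
      C⁻¹ * ivlen (S.wordI l) ≤ ivlen (S.wordI (l ++ [b])) ∧
      ivlen (S.wordI (l ++ [b])) ≤ ivlen (S.wordI l) := by
  classical
  have hr := S.hr
  have h0 : (0:ℕ) < 2*r := by omega
  have h1 : (1:ℕ) < 2*r := by omega
  have hi : Nonempty (Fin (2*r)) := ⟨⟨0, h0⟩⟩
  set i0 : Fin (2*r) := ⟨0, h0⟩ with hi0
  set i1 : Fin (2*r) := ⟨1, h1⟩ with hi1
  have hune : (Finset.univ : Finset (Fin (2*r))).Nonempty := Finset.univ_nonempty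
  -- global bounds
  set M : ℝ := Finset.univ.sup' hune S.ξ₁ with hM
  set mm : ℝ := Finset.univ.inf' hune S.ξ₀ with hmm
  have hbound : ∀ a : Fin (2*r), ∀ x ∈ Icc (S.ξ₀ a) (S.ξ₁ a), mm ≤ x ∧ x ≤ M := by
    intro a x hx
    exact ⟨le_trans (Finset.inf'_le _ (Finset.mem_univ a)) hx.1,
      le_trans hx.2 (Finset.le_sup' _ (Finset.mem_univ a))⟩
  set Lmax : ℝ := Finset.univ.sup' hune (fun a => S.ξ₁ a - S.ξ₀ a) with hLm
  have hLmax : ∀ a, S.ξ₁ a - S.ξ₀ a ≤ Lmax := by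
    intro a
    rw [hLm]
    exact Finset.le_sup' (fun a => S.ξ₁ a - S.ξ₀ a) (Finset.mem_univ a)
  have hLmaxpos : 0 < Lmax := lt_of_lt_of_le (by linarith [S.hlt i0]) (hLmax i0)
  -- the minimal gap d0
  set gapf : Fin (2*r) × Fin (2*r) → ℝ := fun p =>
    if S.ξ₁ p.1 < S.ξ₀ p.2 then S.ξ₀ p.2 - S.ξ₁ p.1 else S.ξ₀ p.1 - S.ξ₁ p.2 with hgapf
  set P : Finset (Fin (2*r) × Fin (2*r)) := Finset.univ.filter (fun p => p.1 ≠ p.2) with hP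
  have hPne : P.Nonempty := ⟨(i0, i1), by
    rw [hP, Finset.mem_filter]
    exact ⟨Finset.mem_univ _, by simp [hi0, hi1, Fin.ext_iff]⟩⟩
  set d0 : ℝ := P.inf' hPne gapf with hd0
  have hgap_le : ∀ a b : Fin (2*r), a ≠ b → d0 ≤ gapf (a, b) := by
    intro a b h
    exact Finset.inf'_le _ (by rw [hP, Finset.mem_filter]; exact ⟨Finset.mem_univ _, h⟩)
  have hd0pos : 0 < d0 := by
    rw [hd0, Finset.lt_inf'_iff]
    intro p hp
    have hab : p.1 ≠ p.2 := (Finset.mem_filter.mp hp).2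
    rw [hgapf]
    dsimp only
    split_ifs with hif
    · linarith
    · rcases S.order hab with h' | h'
      · exact absurd h' hif
      · linarith
  have hd0Diam : d0 ≤ M - mm := by
    refine le_trans (hgap_le i0 i1 (by simp [hi0, hi1, Fin.ext_iff])) ?_
    have b0 := hbound i0 (S.ξ₀ i0) ⟨le_refl _, (S.hlt i0).le⟩
    have b1 := hbound i0 (S.ξ₁ i0) ⟨(S.hlt i0).le, le_refl _⟩
    have b2 := hbound i1 (S.ξ₀ i1) ⟨le_refl _, (S.hlt i1).le⟩
    have b3 := hbound i1 (S.ξ₁ i1) ⟨(S.hlt i1).le, le_refl _⟩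
    rw [hgapf]
    dsimp only
    split_ifs <;> linarith [b0.1, b1.2, b2.1, b3.2]
  have hsep : ∀ a b : Fin (2*r), a ≠ b → ∀ x ∈ Icc (S.ξ₀ a) (S.ξ₁ a),
      ∀ y ∈ Icc (S.ξ₀ b) (S.ξ₁ b), x < y → d0 ≤ y - x := by
    intro a b hab x hx y hy hxy
    rcases S.order hab with h' | h'
    · have hle := hgap_le a b hab
      rw [hgapf] at hle
      dsimp only at hle
      rw [if_pos h'] at hle
      linarith [hx.2, hy.1]
    · linarith [hy.2, hx.1]
  -- the minimal child length m0
  have hletter_den : ∀ a b : Fin (2*r), b ≠ bar a →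
      ∀ z ∈ Icc (S.ξ₀ b) (S.ξ₁ b), (S.γ a) 1 0 * z + (S.γ a) 1 1 ≠ 0 := by
    intro a b h z hz
    exact (S.letter_maps a (S.not_mem_Ioo h hz)).1
  set Q : Finset (Fin (2*r) × Fin (2*r)) := Finset.univ.filter (fun p => p.2 ≠ bar p.1) with hQ
  have hQne : Q.Nonempty := ⟨(i0, i0), by
    rw [hQ, Finset.mem_filter]
    refine ⟨Finset.mem_univ _, ?_⟩
    rw [hi0, bar]
    simp only [Fin.ext_iff]
    split_ifs <;> simp <;> omega⟩
  set jf : Fin (2*r) × Fin (2*r) → ℝ := fun p =>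
    mobius (S.γ p.1) (S.ξ₁ p.2) - mobius (S.γ p.1) (S.ξ₀ p.2) with hjf
  set m0 : ℝ := Q.inf' hQne jf with hm0
  have hjfpos : ∀ a b : Fin (2*r), b ≠ bar a → 0 < jf (a, b) := by
    intro a b h
    have := mobius_strictMonoOn (S.γ a) (S.hlt b).le (hletter_den a b h)
      ⟨le_refl _, (S.hlt b).le⟩ ⟨(S.hlt b).le, le_refl _⟩ (S.hlt b)
    rw [hjf]
    dsimp only
    linarith
  have hm0le : ∀ a b : Fin (2*r), b ≠ bar a → m0 ≤ jf (a, b) := by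
    intro a b h
    exact Finset.inf'_le _ (by rw [hQ, Finset.mem_filter]; exact ⟨Finset.mem_univ _, h⟩)
  have hm0le2 : ∀ a b : Fin (2*r), b ≠ bar a →
      m0 ≤ mobius (S.γ a) (S.ξ₁ b) - mobius (S.γ a) (S.ξ₀ b) := by
    intro a b h
    have h2 := hm0le a b h
    rw [hjf] at h2
    exact h2
  have hm0pos : 0 < m0 := by
    rw [hm0, Finset.lt_inf'_iff]
    intro p hp
    exact hjfpos p.1 p.2 (Finset.mem_filter.mp hp).2
  have hDiampos : 0 < M - mm := lt_of_lt_of_le hd0pos hd0Diam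
  -- the constant
  refine ⟨(M - mm) * Lmax / (d0 * m0),
    div_pos (mul_pos hDiampos hLmaxpos) (mul_pos hd0pos hm0pos), ?_⟩
  intro l b hne hw
  clear_value i0 i1 M mm Lmax gapf P d0 Q jf m0
  have hCinv : ((M - mm) * Lmax / (d0 * m0))⁻¹ = d0 * m0 / ((M - mm) * Lmax) := inv_div _ _
  rw [hCinv]
  -- word structure
  have hwl : S.IsWord l := hw.prefix (List.prefix_append _ _)
  have hbN : b ≠ bar (l.getLast hne) := by
    rw [SchottkyData.IsWord, List.Chain', List.isChain_append] at hw
    exact hw.2.2 _ (List.getLast?_eq_getLast hne) _ rfl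
  have huv : S.ξ₀ (l.getLast hne) < S.ξ₁ (l.getLast hne) := S.hlt _
  have hIb_den := hletter_den (l.getLast hne) b hbN
  have hmono_b := mobius_strictMonoOn (S.γ (l.getLast hne)) (S.hlt b).le hIb_den
  have hu'v' : mobius (S.γ (l.getLast hne)) (S.ξ₀ b) < mobius (S.γ (l.getLast hne)) (S.ξ₁ b) :=
    hmono_b ⟨le_refl _, (S.hlt b).le⟩ ⟨(S.hlt b).le, le_refl _⟩ (S.hlt b)
  have hu'mem : mobius (S.γ (l.getLast hne)) (S.ξ₀ b)
      ∈ Icc (S.ξ₀ (l.getLast hne)) (S.ξ₁ (l.getLast hne)) :=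
    (S.letter_maps _ (S.not_mem_Ioo hbN ⟨le_refl _, (S.hlt b).le⟩)).2
  have hv'mem : mobius (S.γ (l.getLast hne)) (S.ξ₁ b)
      ∈ Icc (S.ξ₀ (l.getLast hne)) (S.ξ₁ (l.getLast hne)) :=
    (S.letter_maps _ (S.not_mem_Ioo hbN ⟨(S.hlt b).le, le_refl _⟩)).2
  have hm0le' : m0 ≤ mobius (S.γ (l.getLast hne)) (S.ξ₁ b)
      - mobius (S.γ (l.getLast hne)) (S.ξ₀ b) := hm0le2 _ _ hbN
  -- expressing the intervals
  have hldecomp : l.dropLast ++ [l.getLast hne] = l := List.dropLast_append_getLast hne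
  have hγl : S.wordγ l = S.wordγ l.dropLast * S.γ (l.getLast hne) := by
    conv_lhs => rw [← hldecomp]
    rw [SchottkyData.wordγ, List.map_append, List.prod_append]
    simp [SchottkyData.wordγ]
  have hwordIb : S.wordI (l ++ [b]) = mobius (S.wordγ l) '' Icc (S.ξ₀ b) (S.ξ₁ b) := by
    rw [SchottkyData.wordI, dif_neg (by simp : ¬ l ++ [b] = [])]
    simp [List.dropLast_concat]
  have himg : S.wordI (l ++ [b]) = mobius (S.wordγ l.dropLast) ''
      Icc (mobius (S.γ (l.getLast hne)) (S.ξ₀ b)) (mobius (S.γ (l.getLast hne)) (S.ξ₁ b)) := by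
    rw [hwordIb, hγl, ← mobius_image_Icc (S.γ (l.getLast hne)) (S.hlt b).le hIb_den,
      Set.image_image]
    exact Set.image_congr fun x hx => mobius_mul _ _ x (hIb_den x hx)
  have hwordIl : S.wordI l = mobius (S.wordγ l.dropLast) ''
      Icc (S.ξ₀ (l.getLast hne)) (S.ξ₁ (l.getLast hne)) := by
    rw [SchottkyData.wordI, dif_neg hne]
  rcases eq_or_ne l.dropLast [] with hdl | hdl
  · -- base case : single-letter word
    have hγ1 : S.wordγ l.dropLast = 1 := by rw [hdl]; simp [SchottkyData.wordγ]
    have hmob1 : mobius (1 : SL2) = id := by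
      funext x
      rw [mobius]
      simp [Matrix.one_apply]
    have hWl : S.wordI l = Icc (S.ξ₀ (l.getLast hne)) (S.ξ₁ (l.getLast hne)) := by
      rw [hwordIl, hγ1, hmob1, Set.image_id]
    have hWlb : S.wordI (l ++ [b])
        = Icc (mobius (S.γ (l.getLast hne)) (S.ξ₀ b)) (mobius (S.γ (l.getLast hne)) (S.ξ₁ b)) := by
      rw [himg, hγ1, hmob1, Set.image_id]
    rw [hWl, hWlb, ivlen_Icc huv.le, ivlen_Icc hu'v'.le]
    constructor
    · rw [div_mul_eq_mul_div, div_le_iff₀ (mul_pos hDiampos hLmaxpos)]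
      have k1 : d0 * m0 ≤ (M - mm) * (mobius (S.γ (l.getLast hne)) (S.ξ₁ b)
          - mobius (S.γ (l.getLast hne)) (S.ξ₀ b)) :=
        mul_le_mul hd0Diam hm0le' hm0pos.le hDiampos.le
      have k2 : (d0 * m0) * (S.ξ₁ (l.getLast hne) - S.ξ₀ (l.getLast hne))
          ≤ ((M - mm) * (mobius (S.γ (l.getLast hne)) (S.ξ₁ b)
            - mobius (S.γ (l.getLast hne)) (S.ξ₀ b))) * Lmax :=
        mul_le_mul k1 (hLmax _) (by linarith) (mul_nonneg hDiampos.le (by linarith))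
      nlinarith [k2]
    · linarith [hu'mem.1, hv'mem.2]
  · -- general case : the prefix is a nonempty word
    have hwdl : S.IsWord l.dropLast := hwl.prefix (List.dropLast_prefix l)
    have haN : l.getLast hne ≠ bar (l.dropLast.getLast hdl) := by
      have hch : S.IsWord (l.dropLast ++ [l.getLast hne]) := by rw [hldecomp]; exact hwl
      rw [SchottkyData.IsWord, List.Chain', List.isChain_append] at hch
      exact hch.2.2 _ (List.getLast?_eq_getLast hdl) _ rfl
    obtain ⟨hc, hpmem⟩ := S.word_pole l.dropLast hdl hwdl
    have hpIcc : mobiusPole (S.wordγ l.dropLast)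
        ∈ Icc (S.ξ₀ (bar (l.dropLast.getLast hdl))) (S.ξ₁ (bar (l.dropLast.getLast hdl))) :=
      Ioo_subset_Icc_self hpmem
    have hden_uv : ∀ z ∈ Icc (S.ξ₀ (l.getLast hne)) (S.ξ₁ (l.getLast hne)),
        (S.wordγ l.dropLast) 1 0 * z + (S.wordγ l.dropLast) 1 1 ≠ 0 := by
      intro z hz
      exact (S.word_maps l.dropLast hdl hwdl z (S.not_mem_Ioo haN hz)).1
    set g := S.wordγ l.dropLast with hgdef
    set p := mobiusPole g with hpdef
    set u := S.ξ₀ (l.getLast hne) with hudef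
    set v := S.ξ₁ (l.getLast hne) with hvdef
    set u' := mobius (S.γ (l.getLast hne)) (S.ξ₀ b) with hu'def
    set v' := mobius (S.γ (l.getLast hne)) (S.ξ₁ b) with hv'def
    have hdenp : ∀ z : ℝ, g 1 0 * z + g 1 1 = g 1 0 * (z - p) := by
      intro z
      rw [hpdef, mobiusPole]
      field_simp
      ring
    have hpnot : p ∉ Icc u v := by
      intro hmem
      exact hden_uv p hmem (by rw [hdenp]; ring)
    have hpcase : p < u ∨ v < p := by
      rw [Set.mem_Icc, not_and_or, not_le, not_le] at hpnot
      tauto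
    have humem : u ∈ Icc u v := ⟨le_refl _, huv.le⟩
    have hvmem : v ∈ Icc u v := ⟨huv.le, le_refl _⟩
    have hsub : Icc u' v' ⊆ Icc u v := Set.Icc_subset_Icc hu'mem.1 hv'mem.2
    have hmonog := mobius_strictMonoOn g huv.le hden_uv
    -- length formulas
    have hc2 : (0:ℝ) < g 1 0 * g 1 0 := mul_self_pos.mpr hc
    have hABpos : 0 < (u - p) * (v - p) := by
      rcases hpcase with h' | h'
      · exact mul_pos (by linarith) (by linarith)
      · exact mul_pos_of_neg_of_neg (by linarith) (by linarith)
    have hA'B'pos : 0 < (u' - p) * (v' - p) := by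
      rcases hpcase with h' | h'
      · exact mul_pos (by linarith [hu'mem.1]) (by linarith [hv'mem.1, hu'mem.1, hu'v'.le])
      · exact mul_pos_of_neg_of_neg (by linarith [hu'mem.2]) (by linarith [hv'mem.2])
    have hlen1 : ivlen (S.wordI l) = (v - u) / ((g 1 0 * g 1 0) * ((u - p) * (v - p))) := by
      rw [hwordIl, mobius_image_Icc g huv.le hden_uv,
        ivlen_Icc ((hmonog humem hvmem huv).le),
        mobius_sub g (hden_uv u humem) (hden_uv v hvmem), hdenp, hdenp]
      congr 1
      ring
    have hlen2 : ivlen (S.wordI (l ++ [b]))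
        = (v' - u') / ((g 1 0 * g 1 0) * ((u' - p) * (v' - p))) := by
      rw [himg, mobius_image_Icc g hu'v'.le (fun z hz => hden_uv z (hsub hz)),
        ivlen_Icc ((hmonog (hsub ⟨le_refl _, hu'v'.le⟩) (hsub ⟨hu'v'.le, le_refl _⟩) hu'v').le),
        mobius_sub g (hden_uv u' (hsub ⟨le_refl _, hu'v'.le⟩))
          (hden_uv v' (hsub ⟨hu'v'.le, le_refl _⟩)), hdenp, hdenp]
      congr 1
      ring
    -- the key inequality
    have hpb := hbound (bar (l.dropLast.getLast hdl)) p hpIcc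
    have hub := hbound (l.getLast hne) u humem
    have hvb := hbound (l.getLast hne) v hvmem
    have hgap1 : p < u → d0 ≤ u - p := fun hpu =>
      hsep (bar (l.dropLast.getLast hdl)) (l.getLast hne) (Ne.symm haN) p hpIcc u humem hpu
    have hgap2 : v < p → d0 ≤ p - v := fun hvp =>
      hsep (l.getLast hne) (bar (l.dropLast.getLast hdl)) haN v hvmem p hpIcc hvp
    have hvuL : v - u ≤ Lmax := hLmax (l.getLast hne)
    clear_value g p u v u' v'
    have hkey := key_ineq hu'mem.1 hu'v'.le hv'mem.2 hpcase hpb.1 hpb.2 hub.1 hvb.2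
      hgap1 hgap2 hd0pos
    constructor
    · rw [hlen1, hlen2, div_mul_div_comm,
        div_le_div_iff₀ (mul_pos (mul_pos hDiampos hLmaxpos) (mul_pos hc2 hABpos))
          (mul_pos hc2 hA'B'pos)]
      have k1 : (d0 * ((u' - p) * (v' - p))) * m0
          ≤ ((M - mm) * ((u - p) * (v - p))) * (v' - u') :=
        mul_le_mul hkey hm0le' hm0pos.le (mul_nonneg hDiampos.le hABpos.le)
      have k2 : ((d0 * ((u' - p) * (v' - p))) * m0) * (v - u)
          ≤ (((M - mm) * ((u - p) * (v - p))) * (v' - u')) * Lmax :=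
        mul_le_mul k1 hvuL (by linarith)
          (mul_nonneg (mul_nonneg hDiampos.le hABpos.le) (by linarith))
      have k3 := mul_le_mul_of_nonneg_left k2 hc2.le
      nlinarith [k3]
    · rw [hlen1, hlen2]
      have e1 : mobius g u ≤ mobius g u' := hmonog.monotoneOn humem (hsub ⟨le_refl _, hu'v'.le⟩) hu'mem.1
      have e2 : mobius g v' ≤ mobius g v := hmonog.monotoneOn (hsub ⟨hu'v'.le, le_refl _⟩) hvmem hv'mem.2
      have f1 := mobius_sub g (hden_uv u humem) (hden_uv v hvmem)
      have f2 := mobius_sub g (hden_uv u' (hsub ⟨le_refl _, hu'v'.le⟩))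
        (hden_uv v' (hsub ⟨hu'v'.le, le_refl _⟩))
      rw [hdenp, hdenp] at f1 f2
      have g1 : (v - u) / ((g 1 0 * g 1 0) * ((u - p) * (v - p)))
          = mobius g v - mobius g u := by rw [f1]; congr 1; ring
      have g2 : (v' - u') / ((g 1 0 * g 1 0) * ((u' - p) * (v' - p)))
          = mobius g v' - mobius g u' := by rw [f2]; congr 1; ring
      rw [g1, g2]
      linarith

end
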